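/- Suppose ξ : ℝⁿ → ℝⁿ is a continuously differentiable family of covector components and ψ ∈ ℝ is a constant such that the homothetic equation ∂_j ξ_i(x) + ∂_i ξ_j(x) − 2 Σ_l Γ^l_{ij}(x) ξ_l(x) = 2 ψ g_{ij}(x) holds for all x and all i, j. Then along every geodesic of g the quantity ψ s Σ_{i,j} g_{ij}(x(s)) ẋ^i(s) ẋ^j(s) − Σ_i ξ_i(x(s)) ẋ^i(s) is constant in s; a homothetic Killing vector gives the Noether first integral φ = t ψ g_{ij} ẋ^i ẋ^j − g_{ij} H^i ẋ^j of the geodesic Lagrangian. -/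

import Mathlib

/-- The Christoffel symbols `Γ^i_{jk}(x) = ½ Σ_l (g(x)⁻¹)_{il}
(∂_j g_{lk}(x) + ∂_k g_{lj}(x) − ∂_l g_{jk}(x))` of a metric `g` on `ℝⁿ`,
given in coordinates; `∂_j` is the directional derivative along `Pi.single j 1`. -/
noncomputable def christoffel {n : ℕ} (g : (Fin n → ℝ) → Matrix (Fin n) (Fin n) ℝ)
    (i j k : Fin n) (x : Fin n → ℝ) : ℝ :=
  (1 / 2) * ∑ l, (g x)⁻¹ i l *
    (fderiv ℝ (fun y => g y l k) x (Pi.single j 1)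
      + fderiv ℝ (fun y => g y l j) x (Pi.single k 1)
      - fderiv ℝ (fun y => g y j k) x (Pi.single l 1))

/-- A geodesic of `g`: a twice continuously differentiable curve `γ : ℝ → ℝⁿ` with
`ẍ^i = −Σ_{j,k} Γ^i_{jk}(x) ẋ^j ẋ^k`. -/
def IsGeodesic {n : ℕ} (g : (Fin n → ℝ) → Matrix (Fin n) (Fin n) ℝ)
    (γ : ℝ → Fin n → ℝ) : Prop :=
  (∀ i, ContDiff ℝ 2 (fun s => γ s i)) ∧
  ∀ s i, deriv (deriv (fun t => γ t i)) s =
    - ∑ j, ∑ k, christoffel g i j k (γ s) *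
      deriv (fun t => γ t j) s * deriv (fun t => γ t k) s

/-- Expansion of a continuous linear functional on `ℝⁿ` in the standard basis. -/
lemma clm_expand {n : ℕ} (L : (Fin n → ℝ) →L[ℝ] ℝ) (w : Fin n → ℝ) :
    L w = ∑ j, w j * L (Pi.single j 1) := by
  have hw : w = ∑ j, w j • (Pi.single j 1 : Fin n → ℝ) := by
    funext i
    simp [Pi.single_apply, Finset.sum_apply]
  conv_lhs => rw [hw]
  rw [map_sum]
  simp [smul_eq_mul]

/-- Contraction of the Christoffel symbols with the metric. -/
lemma contract {n : ℕ} (g : (Fin n → ℝ) → Matrix (Fin n) (Fin n) ℝ)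
    (hg_inv : ∀ x, IsUnit (g x).det) (x : Fin n → ℝ) (m j k : Fin n) :
    ∑ i, g x m i * christoffel g i j k x
      = (1/2) * (fderiv ℝ (fun y => g y m k) x (Pi.single j 1)
          + fderiv ℝ (fun y => g y m j) x (Pi.single k 1)
          - fderiv ℝ (fun y => g y j k) x (Pi.single m 1)) := by
  set T : Fin n → ℝ := fun l =>
    fderiv ℝ (fun y => g y l k) x (Pi.single j 1)
      + fderiv ℝ (fun y => g y l j) x (Pi.single k 1)
      - fderiv ℝ (fun y => g y j k) x (Pi.single l 1) with hT
  have hmul : g x * (g x)⁻¹ = 1 := Matrix.mul_nonsing_inv _ (hg_inv x)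
  calc ∑ i, g x m i * christoffel g i j k x
      = (1/2) * ∑ l, (∑ i, g x m i * (g x)⁻¹ i l) * T l := by
        simp only [christoffel, Finset.mul_sum, Finset.sum_mul]
        rw [Finset.sum_comm]
        exact Finset.sum_congr rfl fun l _ => Finset.sum_congr rfl fun i _ => by ring
    _ = (1/2) * ∑ l, (1 : Matrix (Fin n) (Fin n) ℝ) m l * T l := by
        congr 1
        exact Finset.sum_congr rfl fun l _ => by rw [← Matrix.mul_apply, hmul]
    _ = (1/2) * T m := by
        congr 1
        rw [Finset.sum_eq_single m]
        · simp [Matrix.one_apply]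
        · intro b _ hb; simp [Matrix.one_apply, Ne.symm hb]
        · simp

/-- Energy conservation along a geodesic, algebraic part. -/
lemma energy_alg {n : ℕ} (G : Fin n → Fin n → ℝ) (W Aa : Fin n → ℝ)
    (Dg : Fin n → Fin n → Fin n → ℝ) (Γ' : Fin n → Fin n → Fin n → ℝ)
    (hGsymm : ∀ i j, G i j = G j i)
    (hAgeo : ∀ i, Aa i = - ∑ p, ∑ q, Γ' i p q * W p * W q)
    (hcontract : ∀ m p q, ∑ i, G m i * Γ' i p q
      = (1/2) * (Dg p m q + Dg q m p - Dg m p q)) :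
    (∑ i, ∑ j, (((∑ l, W l * Dg l i j) * W i + G i j * Aa i) * W j
      + G i j * W i * Aa j)) = 0 := by
  have key1 : (∑ i, ∑ p, ∑ q, ∑ j, Γ' i p q * W p * W q * (G i j * W j))
      = (1/2) * (∑ l, ∑ i, ∑ j, Dg l i j * W l * W i * W j) := by
    have hin : ∀ p q j, (∑ i, Γ' i p q * W p * W q * (G i j * W j))
        = (1/2) * (Dg p j q + Dg q j p - Dg j p q) * (W p * W q * W j) := by
      intro p q j
      calc ∑ i, Γ' i p q * W p * W q * (G i j * W j)
          = (∑ i, G j i * Γ' i p q) * (W p * W q * W j) := by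
            rw [Finset.sum_mul]
            refine Finset.sum_congr rfl fun i _ => ?_
            rw [hGsymm j i]
            ring
        _ = (1/2) * (Dg p j q + Dg q j p - Dg j p q) * (W p * W q * W j) := by
            rw [hcontract j p q]
    calc ∑ i, ∑ p, ∑ q, ∑ j, Γ' i p q * W p * W q * (G i j * W j)
        = ∑ p, ∑ i, ∑ q, ∑ j, Γ' i p q * W p * W q * (G i j * W j) := Finset.sum_comm
      _ = ∑ p, ∑ q, ∑ i, ∑ j, Γ' i p q * W p * W q * (G i j * W j) :=
          Finset.sum_congr rfl fun p _ => Finset.sum_comm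
      _ = ∑ p, ∑ q, ∑ j, ∑ i, Γ' i p q * W p * W q * (G i j * W j) :=
          Finset.sum_congr rfl fun p _ => Finset.sum_congr rfl fun q _ => Finset.sum_comm
      _ = ∑ p, ∑ q, ∑ j, ((1/2) * (Dg p j q * W p * W q * W j)
            + (1/2) * (Dg q j p * W p * W q * W j)
            - (1/2) * (Dg j p q * W p * W q * W j)) := by
          refine Finset.sum_congr rfl fun p _ => Finset.sum_congr rfl fun q _ =>
            Finset.sum_congr rfl fun j _ => ?_
          rw [hin p q j]; ring
      _ = (1/2) * (∑ p, ∑ q, ∑ j, Dg p j q * W p * W q * W j)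
            + (1/2) * (∑ p, ∑ q, ∑ j, Dg q j p * W p * W q * W j)
            - (1/2) * (∑ p, ∑ q, ∑ j, Dg j p q * W p * W q * W j) := by
          simp only [Finset.sum_add_distrib, Finset.sum_sub_distrib, ← Finset.mul_sum]
      _ = (1/2) * (∑ l, ∑ i, ∑ j, Dg l i j * W l * W i * W j) := by
          have hA1 : (∑ p, ∑ q, ∑ j, Dg p j q * W p * W q * W j)
              = ∑ l, ∑ i, ∑ j, Dg l i j * W l * W i * W j :=
            calc ∑ p, ∑ q, ∑ j, Dg p j q * W p * W q * W j
                = ∑ p, ∑ j, ∑ q, Dg p j q * W p * W q * W j :=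
                  Finset.sum_congr rfl fun p _ => Finset.sum_comm
              _ = ∑ l, ∑ i, ∑ j, Dg l i j * W l * W i * W j :=
                  Finset.sum_congr rfl fun p _ => Finset.sum_congr rfl fun j _ =>
                    Finset.sum_congr rfl fun q _ => by ring
          have hA2 : (∑ p, ∑ q, ∑ j, Dg q j p * W p * W q * W j)
              = ∑ l, ∑ i, ∑ j, Dg l i j * W l * W i * W j :=
            calc ∑ p, ∑ q, ∑ j, Dg q j p * W p * W q * W j
                = ∑ q, ∑ p, ∑ j, Dg q j p * W p * W q * W j := Finset.sum_comm
              _ = ∑ q, ∑ j, ∑ p, Dg q j p * W p * W q * W j :=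
                  Finset.sum_congr rfl fun q _ => Finset.sum_comm
              _ = ∑ l, ∑ i, ∑ j, Dg l i j * W l * W i * W j :=
                  Finset.sum_congr rfl fun q _ => Finset.sum_congr rfl fun j _ =>
                    Finset.sum_congr rfl fun p _ => by ring
          have hA3 : (∑ p, ∑ q, ∑ j, Dg j p q * W p * W q * W j)
              = ∑ l, ∑ i, ∑ j, Dg l i j * W l * W i * W j :=
            calc ∑ p, ∑ q, ∑ j, Dg j p q * W p * W q * W j
                = ∑ p, ∑ j, ∑ q, Dg j p q * W p * W q * W j :=
                  Finset.sum_congr rfl fun p _ => Finset.sum_comm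
              _ = ∑ j, ∑ p, ∑ q, Dg j p q * W p * W q * W j := Finset.sum_comm
              _ = ∑ l, ∑ i, ∑ j, Dg l i j * W l * W i * W j :=
                  Finset.sum_congr rfl fun j _ => Finset.sum_congr rfl fun p _ =>
                    Finset.sum_congr rfl fun q _ => by ring
          rw [hA1, hA2, hA3]; ring
  have hS1 : (∑ i, ∑ j, G i j * Aa i * W j)
      = -(∑ i, ∑ p, ∑ q, ∑ j, Γ' i p q * W p * W q * (G i j * W j)) := by
    rw [← Finset.sum_neg_distrib]
    refine Finset.sum_congr rfl fun i _ => ?_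
    calc ∑ j, G i j * Aa i * W j
        = Aa i * ∑ j, G i j * W j := by
          rw [Finset.mul_sum]
          exact Finset.sum_congr rfl fun j _ => by ring
      _ = -((∑ p, ∑ q, Γ' i p q * W p * W q) * ∑ j, G i j * W j) := by
          rw [hAgeo i]; ring
      _ = -(∑ p, ∑ q, ∑ j, Γ' i p q * W p * W q * (G i j * W j)) := by
          congr 1
          rw [Finset.sum_mul]
          refine Finset.sum_congr rfl fun p _ => ?_
          rw [Finset.sum_mul]
          refine Finset.sum_congr rfl fun q _ => ?_
          rw [Finset.mul_sum]
  have hS2 : (∑ i, ∑ j, G i j * W i * Aa j) = ∑ i, ∑ j, G i j * Aa i * W j := by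
    rw [Finset.sum_comm]
    refine Finset.sum_congr rfl fun a _ => Finset.sum_congr rfl fun b _ => ?_
    rw [hGsymm b a]; ring
  have hTT : (∑ i, ∑ j, ∑ l, Dg l i j * W l * W i * W j)
      = ∑ l, ∑ i, ∑ j, Dg l i j * W l * W i * W j :=
    calc ∑ i, ∑ j, ∑ l, Dg l i j * W l * W i * W j
        = ∑ i, ∑ l, ∑ j, Dg l i j * W l * W i * W j :=
          Finset.sum_congr rfl fun i _ => Finset.sum_comm
      _ = ∑ l, ∑ i, ∑ j, Dg l i j * W l * W i * W j := Finset.sum_comm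
  calc (∑ i, ∑ j, (((∑ l, W l * Dg l i j) * W i + G i j * Aa i) * W j
      + G i j * W i * Aa j))
      = (∑ i, ∑ j, ((∑ l, Dg l i j * W l * W i * W j)
          + (G i j * Aa i * W j + G i j * W i * Aa j))) := by
        refine Finset.sum_congr rfl fun i _ => Finset.sum_congr rfl fun j _ => ?_
        have h : (∑ l, W l * Dg l i j) * W i * W j = ∑ l, Dg l i j * W l * W i * W j := by
          rw [Finset.sum_mul, Finset.sum_mul]
          exact Finset.sum_congr rfl fun l _ => by ring
        calc ((∑ l, W l * Dg l i j) * W i + G i j * Aa i) * W j + G i j * W i * Aa j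
            = (∑ l, W l * Dg l i j) * W i * W j
              + (G i j * Aa i * W j + G i j * W i * Aa j) := by ring
          _ = (∑ l, Dg l i j * W l * W i * W j)
              + (G i j * Aa i * W j + G i j * W i * Aa j) := by rw [h]
    _ = (∑ i, ∑ j, ∑ l, Dg l i j * W l * W i * W j)
        + ((∑ i, ∑ j, G i j * Aa i * W j) + (∑ i, ∑ j, G i j * W i * Aa j)) := by
        simp only [Finset.sum_add_distrib]
    _ = 0 := by
        rw [hTT, hS2, hS1, key1]; ring

/-- The homothetic Killing identity along a geodesic, algebraic part. -/
lemma xi_alg {n : ℕ} (G : Fin n → Fin n → ℝ) (W Aa Xi : Fin n → ℝ) (ψ : ℝ)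
    (Dξ : Fin n → Fin n → ℝ) (Γ' : Fin n → Fin n → Fin n → ℝ)
    (hAgeo : ∀ i, Aa i = - ∑ p, ∑ q, Γ' i p q * W p * W q)
    (hhom : ∀ i j, Dξ j i + Dξ i j - 2 * (∑ l, Γ' l i j * Xi l) = 2 * ψ * G i j) :
    (∑ i, ((∑ l, W l * Dξ l i) * W i + Xi i * Aa i))
      = ψ * (∑ i, ∑ j, G i j * W i * W j) := by
  have hQ' : (∑ i, Xi i * Aa i)
      = -(∑ i, ∑ j, (∑ l, Γ' l i j * Xi l) * W i * W j) := by
    have h1 : (∑ i, Xi i * Aa i)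
        = -(∑ i, ∑ p, ∑ q, Γ' i p q * W p * W q * Xi i) := by
      rw [← Finset.sum_neg_distrib]
      refine Finset.sum_congr rfl fun i _ => ?_
      calc Xi i * Aa i
          = -(Xi i * ∑ p, ∑ q, Γ' i p q * W p * W q) := by rw [hAgeo i]; ring
        _ = -(∑ p, ∑ q, Γ' i p q * W p * W q * Xi i) := by
            congr 1
            rw [Finset.mul_sum]
            refine Finset.sum_congr rfl fun p _ => ?_
            rw [Finset.mul_sum]
            exact Finset.sum_congr rfl fun q _ => by ring
    rw [h1]
    congr 1
    calc ∑ i, ∑ p, ∑ q, Γ' i p q * W p * W q * Xi i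
        = ∑ p, ∑ i, ∑ q, Γ' i p q * W p * W q * Xi i := Finset.sum_comm
      _ = ∑ p, ∑ q, ∑ i, Γ' i p q * W p * W q * Xi i :=
          Finset.sum_congr rfl fun p _ => Finset.sum_comm
      _ = ∑ i, ∑ j, (∑ l, Γ' l i j * Xi l) * W i * W j := by
          refine Finset.sum_congr rfl fun p _ => Finset.sum_congr rfl fun q _ => ?_
          rw [Finset.sum_mul, Finset.sum_mul]
          exact Finset.sum_congr rfl fun l _ => by ring
  have hB2 : (∑ i, ∑ j, Dξ i j * W i * W j) = ∑ i, ∑ j, Dξ j i * W i * W j :=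
    calc ∑ i, ∑ j, Dξ i j * W i * W j
        = ∑ j, ∑ i, Dξ i j * W i * W j := Finset.sum_comm
      _ = ∑ i, ∑ j, Dξ j i * W i * W j :=
          Finset.sum_congr rfl fun a _ => Finset.sum_congr rfl fun b _ => by ring
  calc (∑ i, ((∑ l, W l * Dξ l i) * W i + Xi i * Aa i))
      = (∑ i, ∑ j, Dξ j i * W i * W j) + ∑ i, Xi i * Aa i := by
        rw [← Finset.sum_add_distrib]
        refine Finset.sum_congr rfl fun i _ => ?_
        congr 1
        rw [Finset.sum_mul]
        exact Finset.sum_congr rfl fun l _ => by ring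
    _ = (1/2) * ((∑ i, ∑ j, Dξ j i * W i * W j) + (∑ i, ∑ j, Dξ i j * W i * W j)
          - 2 * (∑ i, ∑ j, (∑ l, Γ' l i j * Xi l) * W i * W j)) := by
        rw [hQ', hB2]; ring
    _ = (1/2) * (∑ i, ∑ j, (Dξ j i + Dξ i j - 2 * (∑ l, Γ' l i j * Xi l)) * (W i * W j)) := by
        congr 1
        symm
        calc ∑ i, ∑ j, (Dξ j i + Dξ i j - 2 * (∑ l, Γ' l i j * Xi l)) * (W i * W j)
            = ∑ i, ∑ j, (Dξ j i * W i * W j + Dξ i j * W i * W j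
                - 2 * ((∑ l, Γ' l i j * Xi l) * W i * W j)) :=
              Finset.sum_congr rfl fun i _ => Finset.sum_congr rfl fun j _ => by ring
          _ = (∑ i, ∑ j, Dξ j i * W i * W j) + (∑ i, ∑ j, Dξ i j * W i * W j)
                - 2 * (∑ i, ∑ j, (∑ l, Γ' l i j * Xi l) * W i * W j) := by
              simp only [Finset.sum_add_distrib, Finset.sum_sub_distrib, ← Finset.mul_sum]
    _ = (1/2) * (∑ i, ∑ j, (2 * ψ * G i j) * (W i * W j)) := by
        refine congrArg _ (Finset.sum_congr rfl fun i _ => Finset.sum_congr rfl fun j _ => ?_)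
        rw [hhom i j]
    _ = ψ * (∑ i, ∑ j, G i j * W i * W j) := by
        rw [Finset.mul_sum, Finset.mul_sum]
        refine Finset.sum_congr rfl fun i _ => ?_
        rw [Finset.mul_sum, Finset.mul_sum]
        exact Finset.sum_congr rfl fun j _ => by ring

/-- The Noether quantity has vanishing derivative along a geodesic. -/
lemma noether_deriv {n : ℕ}
    (g : (Fin n → ℝ) → Matrix (Fin n) (Fin n) ℝ)
    (hg_symm : ∀ x i j, g x i j = g x j i)
    (hg_inv : ∀ x, IsUnit (g x).det)
    (hg_C1 : ∀ i j, ContDiff ℝ 1 fun x => g x i j)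
    (ξ : (Fin n → ℝ) → Fin n → ℝ) (ψ : ℝ)
    (hξ_C1 : ∀ i, ContDiff ℝ 1 fun x => ξ x i)
    (hhom : ∀ x i j,
      fderiv ℝ (fun y => ξ y i) x (Pi.single j 1)
        + fderiv ℝ (fun y => ξ y j) x (Pi.single i 1)
        - 2 * ∑ l, christoffel g l i j x * ξ x l
        = 2 * ψ * g x i j)
    (γ : ℝ → Fin n → ℝ) (hγ : IsGeodesic g γ) (s : ℝ) :
    HasDerivAt (fun t =>
      ψ * t * (∑ i, ∑ j, g (γ t) i j * deriv (fun u => γ u i) t * deriv (fun u => γ u j) t)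
        - ∑ i, ξ (γ t) i * deriv (fun u => γ u i) t) 0 s := by
  obtain ⟨hC2, hgeo⟩ := hγ
  have hγ' : ∀ t, HasDerivAt γ (fun i => deriv (fun u => γ u i) t) t := by
    intro t
    rw [hasDerivAt_pi]
    intro i
    exact (((hC2 i).differentiable (by norm_num)) t).hasDerivAt
  have hvC1 : ∀ i, ContDiff ℝ 1 (deriv (fun u => γ u i)) := by
    intro i
    have := (contDiff_succ_iff_deriv (n := 1)).1 (by exact_mod_cast hC2 i)
    exact this.2.2
  have hacc : ∀ i t, HasDerivAt (fun u => deriv (fun r => γ r i) u)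
      (deriv (deriv (fun r => γ r i)) t) t := by
    intro i t
    exact (((hvC1 i).differentiable one_ne_zero) t).hasDerivAt
  have hchain : ∀ (f : (Fin n → ℝ) → ℝ), ContDiff ℝ 1 f → ∀ t,
      HasDerivAt (fun u => f (γ u))
        (∑ l, deriv (fun u => γ u l) t * fderiv ℝ f (γ t) (Pi.single l 1)) t := by
    intro f hf t
    have h := ((hf.differentiable one_ne_zero (γ t)).hasFDerivAt).comp_hasDerivAt t (hγ' t)
    rw [← clm_expand]
    exact h
  set x := γ s with hx
  set W : Fin n → ℝ := fun i => deriv (fun u => γ u i) s with hW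
  set Aa : Fin n → ℝ := fun i => deriv (deriv (fun u => γ u i)) s with hAa
  set Dg : Fin n → Fin n → Fin n → ℝ :=
    fun l i j => fderiv ℝ (fun y => g y i j) x (Pi.single l 1) with hDg
  set Dξ : Fin n → Fin n → ℝ :=
    fun l i => fderiv ℝ (fun y => ξ y i) x (Pi.single l 1) with hDξ
  set Γ' : Fin n → Fin n → Fin n → ℝ := fun i j k => christoffel g i j k x with hΓ'
  have hAgeo : ∀ i, Aa i = - ∑ p, ∑ q, Γ' i p q * W p * W q := fun i => hgeo s i
  have hE : HasDerivAt (fun t =>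
      ∑ i, ∑ j, g (γ t) i j * deriv (fun u => γ u i) t * deriv (fun u => γ u j) t)
      (∑ i, ∑ j, (((∑ l, W l * Dg l i j) * W i + g x i j * Aa i) * W j
        + g x i j * W i * Aa j)) s := by
    apply HasDerivAt.fun_sum
    intro i _
    apply HasDerivAt.fun_sum
    intro j _
    exact ((hchain (fun y => g y i j) (hg_C1 i j) s).mul (hacc i s)).mul (hacc j s)
  have hΦ : HasDerivAt (fun t => ∑ i, ξ (γ t) i * deriv (fun u => γ u i) t)
      (∑ i, ((∑ l, W l * Dξ l i) * W i + ξ x i * Aa i)) s := by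
    apply HasDerivAt.fun_sum
    intro i _
    exact (hchain (fun y => ξ y i) (hξ_C1 i) s).mul (hacc i s)
  have hcontract : ∀ m p q, ∑ i, g x m i * Γ' i p q
      = (1/2) * (Dg p m q + Dg q m p - Dg m p q) := by
    intro m p q
    have h := contract g hg_inv x m p q
    simp only [hΓ', hDg]
    exact h
  have hE0 : (∑ i, ∑ j, (((∑ l, W l * Dg l i j) * W i + g x i j * Aa i) * W j
      + g x i j * W i * Aa j)) = 0 :=
    energy_alg (fun i j => g x i j) W Aa Dg Γ' (fun i j => hg_symm x i j) hAgeo hcontract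
  have hΦval : (∑ i, ((∑ l, W l * Dξ l i) * W i + ξ x i * Aa i))
      = ψ * (∑ i, ∑ j, g x i j * W i * W j) := by
    refine xi_alg (fun i j => g x i j) W Aa (fun i => ξ x i) ψ Dξ Γ' hAgeo ?_
    intro i j
    simp only [hΓ', hDξ]
    exact hhom x i j
  have hlin : HasDerivAt (fun t : ℝ => ψ * t) ψ s := by
    simpa using (hasDerivAt_id s).const_mul ψ
  have hF := (hlin.mul hE).sub hΦ
  rw [hE0, hΦval] at hF
  exact hF.congr_deriv (by simp only [mul_zero, add_zero]; exact sub_self _)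

/-- A homothetic Killing vector `ξ` with constant homothetic factor `ψ`,
i.e. `∂_j ξ_i + ∂_i ξ_j − 2 Σ_l Γ^l_{ij} ξ_l = 2 ψ g_{ij}`, gives the Noether first
integral `ψ s Σ_{i,j} g_{ij} ẋ^i ẋ^j − Σ_i ξ_i ẋ^i` of the geodesic Lagrangian. -/
theorem homothetic_noether_first_integral {n : ℕ} (hn : 1 ≤ n)
    (g : (Fin n → ℝ) → Matrix (Fin n) (Fin n) ℝ)
    (hg_symm : ∀ x i j, g x i j = g x j i)
    (hg_inv : ∀ x, IsUnit (g x).det)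
    (hg_C1 : ∀ i j, ContDiff ℝ 1 fun x => g x i j)
    (ξ : (Fin n → ℝ) → Fin n → ℝ) (ψ : ℝ)
    (hξ_C1 : ∀ i, ContDiff ℝ 1 fun x => ξ x i)
    (hhom : ∀ x i j,
      fderiv ℝ (fun y => ξ y i) x (Pi.single j 1)
        + fderiv ℝ (fun y => ξ y j) x (Pi.single i 1)
        - 2 * ∑ l, christoffel g l i j x * ξ x l
        = 2 * ψ * g x i j)
    (γ : ℝ → Fin n → ℝ) (hγ : IsGeodesic g γ) (s₁ s₂ : ℝ) :
    ψ * s₁ * (∑ i, ∑ j, g (γ s₁) i j * deriv (fun t => γ t i) s₁ * deriv (fun t => γ t j) s₁)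
        - ∑ i, ξ (γ s₁) i * deriv (fun t => γ t i) s₁
      = ψ * s₂ * (∑ i, ∑ j, g (γ s₂) i j * deriv (fun t => γ t i) s₂ * deriv (fun t => γ t j) s₂)
        - ∑ i, ξ (γ s₂) i * deriv (fun t => γ t i) s₂ := by
  have hd := fun t => noether_deriv g hg_symm hg_inv hg_C1 ξ ψ hξ_C1 hhom γ hγ t
  have hdiff : Differentiable ℝ (fun t =>
      ψ * t * (∑ i, ∑ j, g (γ t) i j * deriv (fun u => γ u i) t * deriv (fun u => γ u j) t)
        - ∑ i, ξ (γ t) i * deriv (fun u => γ u i) t) := fun t => (hd t).differentiableAt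
  exact is_const_of_deriv_eq_zero hdiff (fun t => (hd t).deriv) s₁ s₂
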